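/- Let p : ℝ → ℝ be a function with closed graph and n a nonnegative integer or ∞ with p ∉ Cⁿ(ℝ,ℝ). Then 𝒜_p = {f ∈ Cⁿ(ℝ,ℝ) : f(p(·)+c) ∈ Cⁿ(ℝ,ℝ) for all c ∈ ℝ} consists exactly of the constant functions. -/

import Mathlib

open Filter Topology Set Bornology

/-- The set of points near which `p` is unbounded. -/
def LocUnbdd (p : ℝ → ℝ) : Set ℝ :=
  {x | ∀ M : ℝ, ∀ ε > (0:ℝ), ∃ y, |y - x| < ε ∧ M < |p y|}

lemma mem_locUnbdd_iff {p : ℝ → ℝ} {x : ℝ} :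
    x ∈ LocUnbdd p ↔ ∀ M : ℝ, ∀ ε > (0:ℝ), ∃ y, |y - x| < ε ∧ M < |p y| := Iff.rfl

lemma isClosed_locUnbdd (p : ℝ → ℝ) : IsClosed (LocUnbdd p) := by
  rw [← isOpen_compl_iff, Metric.isOpen_iff]
  intro x hx
  simp only [LocUnbdd, mem_compl_iff, mem_setOf_eq, not_forall, not_exists, not_and, not_lt] at hx
  obtain ⟨M, ε, hε, hb⟩ := hx
  refine ⟨ε/2, by linarith, fun y hy => ?_⟩
  simp only [LocUnbdd, mem_compl_iff, mem_setOf_eq, not_forall, not_exists, not_and, not_lt]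
  refine ⟨M, ε/2, by linarith, fun z hz => ?_⟩
  apply hb
  rw [Metric.mem_ball, Real.dist_eq] at hy
  have : |z - x| ≤ |z - y| + |y - x| := abs_sub_le _ _ _
  linarith

lemma tendsto_of_abs_sub_lt {u : ℕ → ℝ} {x : ℝ} (h : ∀ j : ℕ, |u j - x| < 1/(j+1)) :
    Tendsto u atTop (𝓝 x) := by
  rw [tendsto_iff_dist_tendsto_zero]
  apply squeeze_zero (fun j => dist_nonneg) (fun j => (le_of_lt ?_))
    tendsto_one_div_add_atTop_nhds_zero_nat
  rw [Real.dist_eq]; exact h _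

lemma graph_limit {p : ℝ → ℝ} (hgraph : IsClosed {q : ℝ × ℝ | q.2 = p q.1})
    {u : ℕ → ℝ} {x L : ℝ} (hu : Tendsto u atTop (𝓝 x))
    (hpu : Tendsto (fun j => p (u j)) atTop (𝓝 L)) : L = p x := by
  have hmem : ∀ j : ℕ, (u j, p (u j)) ∈ {q : ℝ × ℝ | q.2 = p q.1} := fun j => rfl
  have := hgraph.mem_of_tendsto (hu.prodMk_nhds hpu) (Eventually.of_forall hmem)
  exact this

lemma continuousAt_of_not_locUnbdd {p : ℝ → ℝ}
    (hgraph : IsClosed {q : ℝ × ℝ | q.2 = p q.1}) {x : ℝ}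
    (h : x ∉ LocUnbdd p) : ContinuousAt p x := by
  simp only [LocUnbdd, mem_setOf_eq, not_forall, not_exists, not_and, not_lt] at h
  obtain ⟨M, ε, hε, hb⟩ := h
  by_contra hc
  rw [Metric.continuousAt_iff] at hc
  push_neg at hc
  obtain ⟨δ, hδ, hseq⟩ := hc
  have hsel : ∀ j : ℕ, ∃ y, |y - x| < min ε (1/(j+1)) ∧ δ ≤ |p y - p x| := by
    intro j
    obtain ⟨y, hy1, hy2⟩ := hseq (min ε (1/(j+1))) (lt_min hε (by positivity))
    exact ⟨y, by rwa [Real.dist_eq] at hy1, by rwa [Real.dist_eq] at hy2⟩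
  choose y hy1 hy2 using hsel
  have hyx : Tendsto y atTop (𝓝 x) :=
    tendsto_of_abs_sub_lt fun j => lt_of_lt_of_le (hy1 j) (min_le_right _ _)
  have hmem : ∀ j, p (y j) ∈ Icc (-M) M := by
    intro j
    have := hb (y j) (lt_of_lt_of_le (hy1 j) (min_le_left _ _))
    exact abs_le.mp this
  obtain ⟨L, hL, φ, hφ, hLt⟩ := tendsto_subseq_of_bounded (Metric.isBounded_Icc _ _) hmem
  have hLpx : L = p x :=
    graph_limit hgraph (hyx.comp hφ.tendsto_atTop) hLt
  have : δ ≤ |p (y (φ 0)) - p x| := hy2 _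
  have h0 : Tendsto (fun j => |p (y (φ j)) - p x|) atTop (𝓝 |L - p x|) :=
    ((hLt.sub_const _).abs)
  have : δ ≤ |L - p x| :=
    ge_of_tendsto' h0 (fun j => hy2 _)
  rw [hLpx] at this
  simp at this
  linarith

lemma isClosed_preimage_Icc {p : ℝ → ℝ} (hgraph : IsClosed {q : ℝ × ℝ | q.2 = p q.1})
    (M : ℝ) : IsClosed (p ⁻¹' Icc (-M) M) := by
  apply IsSeqClosed.isClosed
  intro u x hu hux
  obtain ⟨L, hL, φ, hφ, hLt⟩ := tendsto_subseq_of_bounded (Metric.isBounded_Icc (-M) M) hu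
  have : L = p x := graph_limit hgraph (hux.comp hφ.tendsto_atTop) hLt
  rw [closure_Icc] at hL
  rwa [this] at hL

lemma locUnbdd_neg (p : ℝ → ℝ) : LocUnbdd (fun x => -(p x)) = LocUnbdd p := by
  ext x
  simp only [LocUnbdd, mem_setOf_eq, abs_neg]

lemma locUnbdd_comp_reflect (p : ℝ → ℝ) (x₀ : ℝ) {z : ℝ} :
    z ∈ LocUnbdd (fun x => p (2*x₀ - x)) ↔ (2*x₀ - z) ∈ LocUnbdd p := by
  constructor
  · intro h M ε hε
    obtain ⟨y, hy1, hy2⟩ := h M ε hε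
    refine ⟨2*x₀ - y, ?_, hy2⟩
    have he : 2*x₀ - y - (2*x₀ - z) = z - y := by ring
    rw [he, abs_sub_comm]; exact hy1
  · intro h M ε hε
    obtain ⟨y, hy1, hy2⟩ := h M ε hε
    refine ⟨2*x₀ - y, ?_, by simpa using hy2⟩
    have he : 2*x₀ - y - z = (2*x₀ - z) - y := by ring
    rw [he, abs_sub_comm]; exact hy1
section
variable {p f : ℝ → ℝ}

lemma key (hgraph : IsClosed {q : ℝ × ℝ | q.2 = p q.1})
    (hfc : ∀ c : ℝ, Continuous fun x => f (p x + c))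
    (x₀ m ε : ℝ) (hε : 0 < ε)
    (hD : ∀ z ∈ LocUnbdd p, |z - x₀| < ε → |p z| ≤ m)
    (hx₀ : x₀ ∈ LocUnbdd p)
    (hseq : ∀ j : ℕ, ∃ x, x₀ < x ∧ x - x₀ < min ε (1/(j+1)) ∧ (j : ℝ) < p x) :
    ∃ k, ∀ y, f y = k := by
  choose x hx1 hx2 hx3 using hseq
  have hxε : ∀ j, |x j - x₀| < ε := fun j => by
    rw [abs_of_pos (sub_pos.mpr (hx1 j))]
    exact lt_of_lt_of_le (hx2 j) (min_le_left _ _)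
  have hxj : ∀ j : ℕ, x j - x₀ < 1/(j+1) := fun j => lt_of_lt_of_le (hx2 j) (min_le_right _ _)
  set K : ℕ → Set ℝ := fun j => LocUnbdd p ∩ Icc x₀ (x j) with hK
  have hKc : ∀ j, IsCompact (K j) := fun j =>
    isCompact_Icc.of_isClosed_subset ((isClosed_locUnbdd p).inter isClosed_Icc)
      inter_subset_right
  have hKne : ∀ j, (K j).Nonempty := fun j => ⟨x₀, hx₀, left_mem_Icc.mpr (le_of_lt (hx1 j))⟩
  set a : ℕ → ℝ := fun j => sSup (K j) with ha
  have haK : ∀ j, a j ∈ K j := fun j => (hKc j).sSup_mem (hKne j)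
  have haD : ∀ j, a j ∈ LocUnbdd p := fun j => (haK j).1
  have hax₀ : ∀ j, x₀ ≤ a j := fun j => (haK j).2.1
  have hax : ∀ j, a j ≤ x j := fun j => (haK j).2.2
  have haε : ∀ j, |a j - x₀| < ε := fun j => by
    rw [abs_of_nonneg (sub_nonneg.mpr (hax₀ j))]
    have h1 := hax j
    have h2 := lt_of_lt_of_le (hx2 j) (min_le_left ε (1/(j+1)))
    linarith
  have hpa : ∀ j, |p (a j)| ≤ m := fun j => hD _ (haD j) (haε j)
  have hxnotD : ∀ j : ℕ, m < (j:ℝ) → x j ∉ LocUnbdd p := by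
    intro j hj hxd
    have h1 := hD _ hxd (hxε j)
    have h2 := hx3 j
    have h3 : p (x j) ≤ |p (x j)| := le_abs_self _
    linarith
  have haxlt : ∀ j : ℕ, m < (j:ℝ) → a j < x j := fun j hj =>
    lt_of_le_of_ne (hax j) (fun h => hxnotD j hj (h ▸ haD j))
  have hIocD : ∀ j, ∀ y ∈ Ioc (a j) (x j), y ∉ LocUnbdd p := by
    intro j y hy hyD
    have h1 : y ∈ K j := ⟨hyD, le_trans (hax₀ j) (le_of_lt hy.1), hy.2⟩
    have h2 : y ≤ a j := le_csSup (hKc j).bddAbove h1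
    exact absurd hy.1 (not_lt.mpr h2)
  have hcont : ∀ j, ∀ y ∈ Ioc (a j) (x j), ContinuousAt p y := fun j y hy =>
    continuousAt_of_not_locUnbdd hgraph (hIocD j y hy)
  by_cases hcase : ∃ j : ℕ, m + 1 < (j:ℝ) ∧ ∀ y ∈ Ioc (a j) (x j), m + 1 < p y
  · -- CASE A : p blows up to +∞ at the right of a j
    obtain ⟨j, hj, hA⟩ := hcase
    have hbX : a j < x j := haxlt j (by linarith)
    have hpb : p (a j) ≤ m := (abs_le.mp (hpa j)).2
    have hA1 : Tendsto p (𝓝[>] (a j)) atTop := by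
      by_contra hco
      rw [tendsto_atTop] at hco; push_neg at hco
      obtain ⟨Kb, hKb⟩ := hco
      have hsel : ∀ i : ℕ, ∃ t, (t ∈ Ioo (a j) (min (x j) (a j + 1/(i+1)))) ∧ p t < Kb := by
        intro i
        have hmem : Ioo (a j) (min (x j) (a j + 1/(i+1))) ∈ 𝓝[>] (a j) :=
          Ioo_mem_nhdsGT_of_mem ⟨le_refl _, lt_min hbX (lt_add_of_pos_right _ (by positivity))⟩
        obtain ⟨t, ht⟩ := (hKb.and_eventually (eventually_of_mem hmem (fun t ht => ht))).exists
        exact ⟨t, ht.2, ht.1⟩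
      choose t ht hpt using hsel
      have htmem : ∀ i, p (t i) ∈ Icc (m+1) Kb := by
        intro i
        refine ⟨le_of_lt (hA _ ⟨(ht i).1, le_trans (le_of_lt (ht i).2) (min_le_left _ _)⟩),
          le_of_lt (hpt i)⟩
      obtain ⟨L, hL, φ, hφ, hLt⟩ := tendsto_subseq_of_bounded (Metric.isBounded_Icc _ _) htmem
      have httend : Tendsto (t ∘ φ) atTop (𝓝 (a j)) := by
        apply tendsto_of_abs_sub_lt
        intro i
        have h1 := (ht (φ i)).1
        have h2 : t (φ i) < a j + 1/(φ i + 1) :=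
          lt_of_lt_of_le (ht (φ i)).2 (min_le_right _ _)
        have h3 : 1/((φ i : ℝ) + 1) ≤ 1/((i:ℝ)+1) := by
          apply one_div_le_one_div_of_le (by positivity)
          have hle : (i:ℝ) ≤ (φ i : ℝ) := Nat.cast_le.mpr hφ.le_apply
          linarith
        simp only [Function.comp_apply]
        rw [abs_of_pos (sub_pos.mpr h1)]
        linarith
      have hLeq : L = p (a j) := graph_limit hgraph httend hLt
      rw [closure_Icc] at hL
      have := hL.1
      rw [hLeq] at this
      linarith
    have hA2 : ∀ c : ℝ, Tendsto (fun u => f (u + c)) atTop (𝓝 (f (p (a j) + c))) := by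
      intro c
      rw [Metric.tendsto_atTop]
      intro ε' hε'
      obtain ⟨η, hη, hcb⟩ := Metric.continuousAt_iff.mp ((hfc c).continuousAt (x := a j)) ε' hε'
      set s := min (x j) (a j + η/2) with hs
      have hbs : a j < s := lt_min hbX (by linarith)
      have hsX : s ≤ x j := min_le_left _ _
      refine ⟨p s, fun u hu => ?_⟩
      have hconn : IsPreconnected (p '' Ioc (a j) s) :=
        (isPreconnected_Ioc).image _
          (fun y hy => (hcont j y ⟨hy.1, le_trans hy.2 hsX⟩).continuousWithinAt)
      have hps : p s ∈ p '' Ioc (a j) s := mem_image_of_mem p ⟨hbs, le_refl s⟩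
      have hbig : ∃ t' ∈ Ioc (a j) s, u ≤ p t' := by
        have hev : ∀ᶠ y in 𝓝[>] (a j), u ≤ p y := hA1.eventually (eventually_ge_atTop u)
        have hmem : Ioc (a j) s ∈ 𝓝[>] (a j) := Ioc_mem_nhdsGT_of_mem ⟨le_refl _, hbs⟩
        obtain ⟨t', ht'⟩ := (hev.and (eventually_of_mem hmem fun y hy => hy)).exists
        exact ⟨t', ht'.2, ht'.1⟩
      obtain ⟨t', ht', hut'⟩ := hbig
      have humem : u ∈ p '' Ioc (a j) s :=
        hconn.ordConnected.out hps (mem_image_of_mem p ht') ⟨hu, hut'⟩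
      obtain ⟨t, ht, hpt⟩ := humem
      rw [← hpt]
      have hds : dist t (a j) < η := by
        rw [Real.dist_eq, abs_of_pos (sub_pos.mpr ht.1)]
        have h1 : s ≤ a j + η/2 := min_le_right _ _
        have h2 := ht.2
        linarith
      exact hcb hds
    refine ⟨f (p (a j)), fun y => ?_⟩
    have hc := hA2 (y - p (a j))
    have h0 := hA2 0
    have hshift : Tendsto (fun u : ℝ => u + (y - p (a j))) atTop atTop :=
      tendsto_atTop_add_const_right _ _ tendsto_id
    have h0' := h0.comp hshift
    simp only [Function.comp_def, add_zero] at h0'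
    have huniq := tendsto_nhds_unique hc h0'
    have hy : p (a j) + (y - p (a j)) = y := by ring
    rw [hy] at huniq
    exact huniq
  · -- CASE B
    push_neg at hcase
    have hclaim : ∀ t : ℝ, m + 2 ≤ t → ∀ c : ℝ, f (t + c) = f (p x₀ + c) := by
      intro t ht c
      obtain ⟨M₀, hM₀⟩ := exists_nat_gt (max (m+1) t)
      have hM₀m : m + 1 < (M₀:ℝ) := lt_of_le_of_lt (le_max_left _ _) hM₀
      have hM₀t : t < (M₀:ℝ) := lt_of_le_of_lt (le_max_right _ _) hM₀
      have hzex : ∀ i : ℕ, ∃ z ∈ Ioc (a (M₀ + i)) (x (M₀ + i)), p z = t := by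
        intro i
        have hjm : m + 1 < ((M₀ + i : ℕ):ℝ) := by
          push_cast; have : (0:ℝ) ≤ i := Nat.cast_nonneg i; linarith
        obtain ⟨y, hy, hpy⟩ := hcase (M₀ + i) hjm
        have hconn : IsPreconnected (p '' Ioc (a (M₀+i)) (x (M₀+i))) :=
          (isPreconnected_Ioc).image _
            (fun w hw => (hcont (M₀+i) w hw).continuousWithinAt)
        have h1 : p y ∈ p '' Ioc (a (M₀+i)) (x (M₀+i)) := mem_image_of_mem p hy
        have h2 : p (x (M₀+i)) ∈ p '' Ioc (a (M₀+i)) (x (M₀+i)) :=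
          mem_image_of_mem p ⟨haxlt _ (by linarith), le_refl _⟩
        have htmem : t ∈ p '' Ioc (a (M₀+i)) (x (M₀+i)) := by
          apply hconn.ordConnected.out h1 h2
          constructor
          · linarith
          · have h3 := hx3 (M₀ + i)
            have h4 : (M₀:ℝ) ≤ ((M₀ + i : ℕ):ℝ) := by push_cast; linarith [Nat.cast_nonneg (α := ℝ) i]
            linarith
        obtain ⟨z, hzmem, hzz⟩ := htmem
        exact ⟨z, hzmem, hzz⟩
      choose z hz1 hz2 using hzex
      have hztend : Tendsto z atTop (𝓝 x₀) := by
        apply tendsto_of_abs_sub_lt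
        intro i
        have h1 : x₀ < z i := lt_of_le_of_lt (hax₀ _) (hz1 i).1
        rw [abs_of_pos (sub_pos.mpr h1)]
        have h2 : z i ≤ x (M₀ + i) := (hz1 i).2
        have h3 := hxj (M₀ + i)
        have h4 : 1/(((M₀ + i : ℕ):ℝ)+1) ≤ 1/((i:ℝ)+1) := by
          apply one_div_le_one_div_of_le (by positivity)
          have h5 : (0:ℝ) ≤ M₀ := Nat.cast_nonneg M₀
          push_cast
          linarith
        linarith
      have h5 : Tendsto (fun i => f (p (z i) + c)) atTop (𝓝 (f (p x₀ + c))) :=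
        ((hfc c).continuousAt.tendsto.comp hztend)
      have h6 : (fun i => f (p (z i) + c)) = fun _ => f (t + c) := by
        funext i; rw [hz2 i]
      rw [h6] at h5
      exact tendsto_nhds_unique tendsto_const_nhds h5
    have haux : ∀ y y' : ℝ, y ≤ y' → f y = f y' := by
      intro y y' hyy
      have e1 : f y = f (p x₀ + (y - (m+2))) := by
        have h := hclaim (m+2) (le_refl _) (y - (m+2))
        have : f y = f ((m+2) + (y - (m+2))) := by congr 1; ring
        rw [this, h]
      have e2 : f y' = f (p x₀ + (y - (m+2))) := by
        have h := hclaim ((m+2) + (y' - y)) (by linarith) (y - (m+2))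
        have : f y' = f (((m+2) + (y' - y)) + (y - (m+2))) := by congr 1; ring
        rw [this, h]
      rw [e1, e2]
    refine ⟨f 0, fun y => ?_⟩
    rcases le_total y 0 with h | h
    · exact haux y 0 h
    · exact (haux 0 y h).symm
lemma key_side (hgraph : IsClosed {q : ℝ × ℝ | q.2 = p q.1})
    (hfc : ∀ c : ℝ, Continuous fun x => f (p x + c))
    (x₀ m ε : ℝ) (hε : 0 < ε)
    (hD : ∀ z ∈ LocUnbdd p, |z - x₀| < ε → |p z| ≤ m)
    (hx₀ : x₀ ∈ LocUnbdd p)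
    (hseq : ∀ j : ℕ, ∃ x, x ≠ x₀ ∧ |x - x₀| < min ε (1/(j+1)) ∧ (j : ℝ) < p x) :
    ∃ k, ∀ y, f y = k := by
  choose y hy0 hy1 hy2 using hseq
  have hsplit : (∃ᶠ j in atTop, y j < x₀) ∨ (∃ᶠ j in atTop, x₀ < y j) :=
    frequently_or_distrib.mp ((Eventually.of_forall (fun j => (hy0 j).lt_or_gt)).frequently)
  have hmin : ∀ j' j : ℕ, j ≤ j' → min ε (1/((j':ℝ)+1)) ≤ min ε (1/((j:ℝ)+1)) := by
    intro j' j hj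
    exact min_le_min (le_refl _)
      (one_div_le_one_div_of_le (by positivity)
        (add_le_add_left ((Nat.cast_le (α := ℝ)).mpr hj) 1))
  rcases hsplit with hfreq | hfreq
  · -- left side : reflect through x₀
    have hgraph' : IsClosed {q : ℝ × ℝ | q.2 = (fun x => p (2*x₀ - x)) q.1} := by
      have hs : {q : ℝ × ℝ | q.2 = (fun x => p (2*x₀ - x)) q.1}
          = (fun q : ℝ × ℝ => (2*x₀ - q.1, q.2)) ⁻¹' {q : ℝ × ℝ | q.2 = p q.1} := rfl
      rw [hs]
      exact hgraph.preimage ((continuous_const.sub continuous_fst).prodMk continuous_snd)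
    have hfc' : ∀ c : ℝ, Continuous fun x => (fun x => p (2*x₀ - x)) x + c |> f := fun c =>
      (hfc c).comp (continuous_const.sub continuous_id)
    have hD' : ∀ z ∈ LocUnbdd (fun x => p (2*x₀ - x)), |z - x₀| < ε →
        |(fun x => p (2*x₀ - x)) z| ≤ m := by
      intro z hz hd
      have hz' : 2*x₀ - z ∈ LocUnbdd p := (locUnbdd_comp_reflect p x₀).mp hz
      have hd' : |2*x₀ - z - x₀| < ε := by
        have he : 2*x₀ - z - x₀ = -(z - x₀) := by ring
        rw [he, abs_neg]; exact hd
      exact hD _ hz' hd'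
    have hx₀' : x₀ ∈ LocUnbdd (fun x => p (2*x₀ - x)) := by
      apply (locUnbdd_comp_reflect p x₀).mpr
      have he : 2*x₀ - x₀ = x₀ := by ring
      rw [he]; exact hx₀
    have hseq' : ∀ j : ℕ, ∃ xx, x₀ < xx ∧ xx - x₀ < min ε (1/(j+1)) ∧
        (j:ℝ) < (fun x => p (2*x₀ - x)) xx := by
      intro j
      obtain ⟨j', hj', hside⟩ := frequently_atTop.mp hfreq j
      refine ⟨2*x₀ - y j', by linarith, ?_, ?_⟩
      · have h1 := hy1 j'
        have h2 : 2*x₀ - y j' - x₀ = -(y j' - x₀) := by ring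
        calc 2*x₀ - y j' - x₀ ≤ |2*x₀ - y j' - x₀| := le_abs_self _
        _ = |y j' - x₀| := by rw [h2, abs_neg]
        _ < min ε (1/((j':ℝ)+1)) := h1
        _ ≤ _ := hmin j' j hj'
      · have h1 := hy2 j'
        have h2 : (j:ℝ) ≤ j' := Nat.cast_le.mpr hj'
        have h3 : (fun x => p (2*x₀ - x)) (2*x₀ - y j') = p (y j') := by
          simp only; congr 1; ring
        rw [h3]; linarith
    exact key hgraph' hfc' x₀ m ε hε hD' hx₀' hseq'
  · -- right side : direct
    apply key hgraph hfc x₀ m ε hε hD hx₀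
    intro j
    obtain ⟨j', hj', hside⟩ := frequently_atTop.mp hfreq j
    refine ⟨y j', hside, ?_, ?_⟩
    · calc y j' - x₀ ≤ |y j' - x₀| := le_abs_self _
      _ < min ε (1/((j':ℝ)+1)) := hy1 j'
      _ ≤ _ := hmin j' j hj'
    · have h2 : (j:ℝ) ≤ j' := Nat.cast_le.mpr hj'
      linarith [hy2 j']

lemma key_sign (hgraph : IsClosed {q : ℝ × ℝ | q.2 = p q.1})
    (hfc : ∀ c : ℝ, Continuous fun x => f (p x + c))
    (x₀ m ε : ℝ) (hε : 0 < ε)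
    (hD : ∀ z ∈ LocUnbdd p, |z - x₀| < ε → |p z| ≤ m)
    (hx₀ : x₀ ∈ LocUnbdd p)
    (hseq : ∀ j : ℕ, ∃ x, x ≠ x₀ ∧ |x - x₀| < min ε (1/(j+1)) ∧ (j : ℝ) < |p x|) :
    ∃ k, ∀ y, f y = k := by
  choose y hy0 hy1 hy2 using hseq
  have hsplit : (∃ᶠ j : ℕ in atTop, (j:ℝ) < p (y j)) ∨ (∃ᶠ j : ℕ in atTop, (j:ℝ) < -(p (y j))) :=
    frequently_or_distrib.mp ((Eventually.of_forall (fun j => lt_abs.mp (hy2 j))).frequently)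
  rcases hsplit with hfreq | hfreq
  · apply key_side hgraph hfc x₀ m ε hε hD hx₀
    intro j
    obtain ⟨j', hj', hbig⟩ := frequently_atTop.mp hfreq j
    have h2 : (j:ℝ) ≤ j' := Nat.cast_le.mpr hj'
    refine ⟨y j', hy0 j', ?_, by linarith⟩
    exact lt_of_lt_of_le (hy1 j')
      (min_le_min (le_refl _)
        (one_div_le_one_div_of_le (by positivity) (by linarith)))
  · -- negate the range
    have hgraph'' : IsClosed {q : ℝ × ℝ | q.2 = (fun x => -(p x)) q.1} := by
      have hs : {q : ℝ × ℝ | q.2 = (fun x => -(p x)) q.1}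
          = (fun q : ℝ × ℝ => (q.1, -q.2)) ⁻¹' {q : ℝ × ℝ | q.2 = p q.1} := by
        ext q; simp only [mem_preimage, mem_setOf_eq]
        constructor <;> intro h <;> linarith
      rw [hs]
      exact hgraph.preimage (continuous_fst.prodMk continuous_snd.neg)
    have hfc'' : ∀ c : ℝ, Continuous fun x => (fun y => f (-y)) ((fun x => -(p x)) x + c) :=
      fun c => (hfc (-c)).congr fun x => congrArg f (by ring)
    have hD'' : ∀ z ∈ LocUnbdd (fun x => -(p x)), |z - x₀| < ε →
        |(fun x => -(p x)) z| ≤ m := by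
      intro z hz hd
      rw [locUnbdd_neg p] at hz
      simpa [abs_neg] using hD z hz hd
    have hx₀'' : x₀ ∈ LocUnbdd (fun x => -(p x)) := by rw [locUnbdd_neg p]; exact hx₀
    have hseq'' : ∀ j : ℕ, ∃ x, x ≠ x₀ ∧ |x - x₀| < min ε (1/(j+1)) ∧
        (j:ℝ) < (fun x => -(p x)) x := by
      intro j
      obtain ⟨j', hj', hbig⟩ := frequently_atTop.mp hfreq j
      have h2 : (j:ℝ) ≤ j' := Nat.cast_le.mpr hj'
      refine ⟨y j', hy0 j', ?_, by simp only; linarith⟩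
      exact lt_of_lt_of_le (hy1 j')
        (min_le_min (le_refl _)
          (one_div_le_one_div_of_le (by positivity) (by linarith)))
    obtain ⟨k, hk⟩ := key_side (f := fun y => f (-y)) hgraph'' hfc'' x₀ m ε hε hD'' hx₀'' hseq''
    exact ⟨k, fun z => by simpa using hk (-z)⟩

lemma continuous_p (hgraph : IsClosed {q : ℝ × ℝ | q.2 = p q.1})
    (hfc : ∀ c : ℝ, Continuous fun x => f (p x + c))
    (hnc : ¬ ∃ k, ∀ y, f y = k) : Continuous p := by
  rw [continuous_iff_continuousAt]
  by_contra hc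
  push_neg at hc
  obtain ⟨x₁, hx₁⟩ := hc
  have hDne : x₁ ∈ LocUnbdd p := by
    by_contra h; exact hx₁ (continuousAt_of_not_locUnbdd hgraph h)
  have hDcl : IsClosed (LocUnbdd p) := isClosed_locUnbdd p
  haveI : Nonempty (LocUnbdd p) := ⟨⟨x₁, hDne⟩⟩
  haveI := hDcl.completeSpace_coe
  have hclosed : ∀ M : ℕ, IsClosed {z : LocUnbdd p | |p z.val| ≤ M} := by
    intro M
    have h2 : {z : LocUnbdd p | |p z.val| ≤ M}
        = Subtype.val ⁻¹' (p ⁻¹' Icc (-(M:ℝ)) M) := by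
      ext z
      simp only [mem_setOf_eq, mem_preimage, mem_Icc, abs_le]
    rw [h2]
    exact (isClosed_preimage_Icc hgraph M).preimage continuous_subtype_val
  have hcover : (⋃ M : ℕ, {z : LocUnbdd p | |p z.val| ≤ M}) = univ := by
    ext z
    simp only [mem_iUnion, mem_setOf_eq, mem_univ, iff_true]
    exact exists_nat_ge |p z.val|
  obtain ⟨M, hM⟩ := nonempty_interior_of_iUnion_of_closed hclosed hcover
  obtain ⟨z₀, hz₀⟩ := hM
  rw [mem_interior_iff_mem_nhds, Metric.mem_nhds_iff] at hz₀
  obtain ⟨ε, hε, hball⟩ := hz₀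
  have hD : ∀ z ∈ LocUnbdd p, |z - z₀.val| < ε → |p z| ≤ M := by
    intro z hz hdist
    have hmem : (⟨z, hz⟩ : LocUnbdd p) ∈ Metric.ball z₀ ε := by
      rw [Metric.mem_ball, Subtype.dist_eq, Real.dist_eq]
      exact hdist
    exact hball hmem
  have hseq : ∀ j : ℕ, ∃ x, x ≠ z₀.val ∧ |x - z₀.val| < min ε (1/(j+1)) ∧ (j:ℝ) < |p x| := by
    intro j
    obtain ⟨x, hx1, hx2⟩ := (mem_locUnbdd_iff.mp z₀.2) (max (j:ℝ) |p z₀.val|)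
      (min ε (1/(j+1))) (lt_min hε (by positivity))
    refine ⟨x, ?_, hx1, lt_of_le_of_lt (le_max_left _ _) hx2⟩
    intro h
    rw [h] at hx2
    exact absurd hx2 (not_lt.mpr (le_max_right _ _))
  exact hnc (key_sign hgraph hfc z₀.val M ε hε hD z₀.2 hseq)
end

theorem stmt_18 (n : ℕ∞) (p : ℝ → ℝ)
    (hgraph : IsClosed {q : ℝ × ℝ | q.2 = p q.1}) (hp : ¬ ContDiff ℝ n p)
    (A : Set (ℝ → ℝ))
    (hA : A = {f | ContDiff ℝ n f ∧ ∀ c : ℝ, ContDiff ℝ n fun x => f (p x + c)}) :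
    A = {f | ∃ k : ℝ, f = fun _ => k} := by
  subst hA
  ext f
  simp only [Set.mem_setOf_eq]
  constructor
  · rintro ⟨hf, hfc⟩
    by_contra hnc
    have hnc' : ¬ ∃ k, ∀ y, f y = k := fun ⟨k, hk⟩ => hnc ⟨k, funext hk⟩
    have hpc : Continuous p :=
      continuous_p hgraph (fun c => (hfc c).continuous) hnc'
    apply hp
    rcases eq_or_ne n 0 with rfl | hn0
    · exact contDiff_zero.mpr hpc
    · have hn1 : (1 : ℕ∞) ≤ n := ENat.one_le_iff_ne_zero.mpr hn0
      have hn1' : (1 : WithTop ℕ∞) ≤ (n : WithTop ℕ∞) := by exact_mod_cast hn1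
      have hn0' : (n : WithTop ℕ∞) ≠ 0 := by exact_mod_cast hn0
      have hfd : Differentiable ℝ f := hf.differentiable hn0'
      have hz : ∃ z, deriv f z ≠ 0 := by
        by_contra h
        push_neg at h
        exact hnc' ⟨f 0, fun y => is_const_of_deriv_eq_zero hfd h y 0⟩
      obtain ⟨z, hz⟩ := hz
      have hder : HasDerivAt f (deriv f z) z := (hfd z).hasDerivAt
      have hfe := hder.hasFDerivAt_equiv hz
      have hfz : ContDiffAt ℝ n f z := hf.contDiffAt
      have hst := hfz.hasStrictFDerivAt' hfe hn0'
      set g := hfz.localInverse hfe hn0' with hg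
      have hginv : ∀ᶠ x in 𝓝 z, g (f x) = x := hst.eventually_left_inverse
      have hgcd : ContDiffAt ℝ n g (f z) := hfz.to_localInverse hfe hn0'
      rw [contDiff_iff_contDiffAt]
      intro x₀
      set c := z - p x₀ with hc
      have hpz : p x₀ + c = z := by rw [hc]; ring
      have h1 : ContDiffAt ℝ n (fun x => f (p x + c)) x₀ := (hfc c).contDiffAt
      have h2 : ContDiffAt ℝ n (fun x => g (f (p x + c))) x₀ := by
        apply ContDiffAt.comp
        · rw [show f (p x₀ + c) = f z by rw [hpz]] at *
          exact hgcd
        · exact h1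
      have htd : Tendsto (fun x => p x + c) (𝓝 x₀) (𝓝 z) := by
        rw [← hpz]
        exact ((hpc.continuousAt).add continuousAt_const)
      have heq : ∀ᶠ x in 𝓝 x₀, g (f (p x + c)) = p x + c := htd.eventually hginv
      have h3 : ContDiffAt ℝ n (fun x => p x + c) x₀ :=
        h2.congr_of_eventuallyEq (heq.mono fun x hx => hx.symm)
      have h4 : ContDiffAt ℝ n (fun x => (p x + c) - c) x₀ := h3.sub contDiffAt_const
      simpa using h4
  · rintro ⟨k, rfl⟩
    exact ⟨contDiff_const, fun c => contDiff_const⟩
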